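/- Let 0 < κ < 1 and C ≥ 0. Let e, f : [0,∞) → ℝ be nonnegative functions with f bounded and f(t)² ≤ e(t) for all t, and suppose that for all 0 ≤ t₀ ≤ t: √(e(t)) ≤ e^{−κ(t−t₀)}·√(e(t₀)) + κ·(1 − e^{−κ(t−t₀)})·sup_{τ∈[t₀,t]} f(τ) + C·e^{−κt}·(t − t₀). Then limsup_{t→∞} f(t) = 0 and lim_{t→∞} e(t) = 0. -/

import Mathlib

open Real Set Filter

/-- **Abstract final step in the proof of the global-existence theorem.**
Let `0 < κ < 1` and `C ≥ 0`. Let `e, f : [0,∞) → ℝ` be nonnegative, with `f` bounded and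
`f(t)² ≤ e(t)`, and suppose that for all `0 ≤ t₀ ≤ t`,
`√(e(t)) ≤ e^{−κ(t−t₀)}·√(e(t₀)) + κ·(1 − e^{−κ(t−t₀)})·sup_{[t₀,t]} f + C·e^{−κt}·(t−t₀)`.
Then `limsup_{t→∞} f(t) = 0` and `lim_{t→∞} e(t) = 0`. -/
theorem limsup_eq_zero_of_energy_estimate
    (κ C : ℝ) (hκ0 : 0 < κ) (hκ1 : κ < 1) (hC : 0 ≤ C)
    (e f : ℝ → ℝ)
    (he_nonneg : ∀ t ∈ Ici (0:ℝ), 0 ≤ e t)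
    (hf_nonneg : ∀ t ∈ Ici (0:ℝ), 0 ≤ f t)
    (hf_bdd : ∃ M : ℝ, ∀ t ∈ Ici (0:ℝ), f t ≤ M)
    (hfe : ∀ t ∈ Ici (0:ℝ), f t ^ 2 ≤ e t)
    (hmain : ∀ t₀ t : ℝ, 0 ≤ t₀ → t₀ ≤ t →
      Real.sqrt (e t) ≤ Real.exp (-κ * (t - t₀)) * Real.sqrt (e t₀)
        + κ * (1 - Real.exp (-κ * (t - t₀))) * sSup (f '' Icc t₀ t)
        + C * Real.exp (-κ * t) * (t - t₀)) :
    Filter.limsup f Filter.atTop = 0 ∧ Filter.Tendsto e Filter.atTop (nhds 0) := by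
  obtain ⟨M, hM⟩ := hf_bdd
  set μ := Filter.limsup f Filter.atTop with hμdef
  have hbd : Filter.IsBoundedUnder (· ≤ ·) Filter.atTop f := by
    refine ⟨M, eventually_map.mpr ?_⟩
    filter_upwards [eventually_ge_atTop (0:ℝ)] with t ht
    exact hM t ht
  have hcobd : Filter.IsCoboundedUnder (· ≤ ·) Filter.atTop f := by
    refine isCoboundedUnder_le_of_eventually_le _ (x := 0) ?_
    filter_upwards [eventually_ge_atTop (0:ℝ)] with t ht
    exact hf_nonneg t ht
  have hμ0 : 0 ≤ μ := by
    refine le_limsup_of_frequently_le ?_ hbd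
    refine Filter.Eventually.frequently ?_
    filter_upwards [eventually_ge_atTop (0:ℝ)] with t ht
    exact hf_nonneg t ht
  -- key step
  have key : ∀ ε > (0:ℝ), ∀ᶠ t in Filter.atTop, Real.sqrt (e t) ≤ κ * (μ + ε) + ε := by
    intro ε hε
    have hlt : ∀ᶠ t in Filter.atTop, f t < μ + ε :=
      eventually_lt_of_limsup_lt (by linarith) hbd
    obtain ⟨t₁, ht₁⟩ := Filter.eventually_atTop.1 hlt
    set t₀ := max t₁ 0 with ht₀def
    have ht₀0 : (0:ℝ) ≤ t₀ := le_max_right _ _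
    have hfτ : ∀ τ, t₀ ≤ τ → f τ < μ + ε := fun τ hτ =>
      ht₁ τ (le_trans (le_max_left _ _) hτ)
    -- the decaying part tends to 0
    have hkt : Filter.Tendsto (fun t : ℝ => κ * t) Filter.atTop Filter.atTop :=
      (tendsto_const_mul_atTop_of_pos hκ0).2 Filter.tendsto_id
    have hexp : Filter.Tendsto (fun t => Real.exp (-(κ * t))) Filter.atTop (nhds 0) := by
      exact Real.tendsto_exp_atBot.comp (Filter.tendsto_neg_atTop_atBot.comp hkt)
    have hpoly : Filter.Tendsto (fun t => (κ * t) * Real.exp (-(κ * t)))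
        Filter.atTop (nhds 0) := by
      have h1 := (Real.tendsto_pow_mul_exp_neg_atTop_nhds_zero 1).comp hkt
      simpa [Function.comp_def] using h1
    have hg : Filter.Tendsto
        (fun t => Real.exp (-κ * (t - t₀)) * Real.sqrt (e t₀)
          + C * Real.exp (-κ * t) * (t - t₀)) Filter.atTop (nhds 0) := by
      have h1 : Filter.Tendsto (fun t => Real.exp (-κ * (t - t₀)) * Real.sqrt (e t₀))
          Filter.atTop (nhds 0) := by
        have : Filter.Tendsto (fun t => Real.exp (κ * t₀) * Real.exp (-(κ * t))
            * Real.sqrt (e t₀)) Filter.atTop (nhds 0) := by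
          simpa using ((hexp.const_mul (Real.exp (κ * t₀))).mul_const (Real.sqrt (e t₀)))
        refine this.congr fun t => ?_
        rw [← Real.exp_add]
        ring_nf
      have h2 : Filter.Tendsto (fun t => C * Real.exp (-κ * t) * (t - t₀))
          Filter.atTop (nhds 0) := by
        have : Filter.Tendsto (fun t => (C / κ) * ((κ * t) * Real.exp (-(κ * t)))
            - (C * t₀) * Real.exp (-(κ * t))) Filter.atTop (nhds 0) := by
          simpa using ((hpoly.const_mul (C / κ)).sub (hexp.const_mul (C * t₀)))
        refine this.congr fun t => ?_
        rw [show -κ * t = -(κ * t) by ring]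
        field_simp
      simpa using h1.add h2
    have hgε : ∀ᶠ t in Filter.atTop,
        Real.exp (-κ * (t - t₀)) * Real.sqrt (e t₀)
          + C * Real.exp (-κ * t) * (t - t₀) ≤ ε := hg.eventually_le_const hε
    filter_upwards [hgε, eventually_ge_atTop t₀] with t hgt htt₀
    have hmaint := hmain t₀ t ht₀0 htt₀
    set S := sSup (f '' Icc t₀ t) with hSdef
    have hne : (f '' Icc t₀ t).Nonempty := ⟨f t₀, ⟨t₀, ⟨le_refl _, htt₀⟩, rfl⟩⟩
    have hS_le : S ≤ μ + ε := by
      refine csSup_le hne ?_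
      rintro x ⟨τ, hτ, rfl⟩
      exact (hfτ τ hτ.1).le
    have hS_nonneg : 0 ≤ S := by
      have hbdd : BddAbove (f '' Icc t₀ t) := by
        refine ⟨μ + ε, ?_⟩
        rintro x ⟨τ, hτ, rfl⟩
        exact (hfτ τ hτ.1).le
      have := le_csSup hbdd (Set.mem_image_of_mem f (⟨le_refl _, htt₀⟩ : t₀ ∈ Icc t₀ t))
      exact le_trans (hf_nonneg t₀ ht₀0) this
    have hE : 0 < Real.exp (-κ * (t - t₀)) := Real.exp_pos _
    have hE1 : Real.exp (-κ * (t - t₀)) ≤ 1 := by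
      rw [Real.exp_le_one_iff]
      nlinarith
    have hmid : κ * (1 - Real.exp (-κ * (t - t₀))) * S ≤ κ * (μ + ε) := by
      have h1 : κ * (1 - Real.exp (-κ * (t - t₀))) * S
          ≤ κ * (1 - Real.exp (-κ * (t - t₀))) * (μ + ε) :=
        mul_le_mul_of_nonneg_left hS_le (by nlinarith)
      nlinarith [mul_nonneg (mul_nonneg hκ0.le hE.le) (show (0:ℝ) ≤ μ + ε by linarith)]
    linarith
  -- conclude μ = 0
  have hμ : μ = 0 := by
    have hle : ∀ ε > (0:ℝ), μ ≤ κ * (μ + ε) + ε := by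
      intro ε hε
      refine limsup_le_of_le hcobd ?_
      filter_upwards [key ε hε, eventually_ge_atTop (0:ℝ)] with t ht ht0
      have : f t ≤ Real.sqrt (e t) := by
        rw [show f t = Real.sqrt (f t ^ 2) by
          rw [Real.sqrt_sq (hf_nonneg t ht0)]]
        exact Real.sqrt_le_sqrt (hfe t ht0)
      linarith
    have hμκ : μ ≤ κ * μ := by
      refine le_of_forall_pos_le_add fun δ hδ => ?_
      have hε : (0:ℝ) < δ / (κ + 1) := by positivity
      have := hle _ hε
      have hk1 : κ * (δ / (κ + 1)) + δ / (κ + 1) = δ := by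
        field_simp
      nlinarith
    nlinarith
  have hsqrt : Filter.Tendsto (fun t => Real.sqrt (e t)) Filter.atTop (nhds 0) := by
    rw [tendsto_order]
    constructor
    · intro a ha
      filter_upwards [eventually_ge_atTop (0:ℝ)] with t ht
      exact lt_of_lt_of_le ha (Real.sqrt_nonneg _)
    · intro a ha
      have hε : (0:ℝ) < a / (2 * (κ + 1)) := by positivity
      filter_upwards [key _ hε] with t ht
      rw [hμ] at ht
      have : κ * (0 + a / (2 * (κ + 1))) + a / (2 * (κ + 1)) < a := by
        rw [zero_add]
        have : (κ + 1) * (a / (2 * (κ + 1))) = a / 2 := by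
          field_simp
        nlinarith
      linarith
  refine ⟨hμ, ?_⟩
  have hsq : Filter.Tendsto (fun t => Real.sqrt (e t) ^ 2) Filter.atTop (nhds 0) := by
    simpa using hsqrt.pow 2
  refine hsq.congr' ?_
  filter_upwards [eventually_ge_atTop (0:ℝ)] with t ht
  exact Real.sq_sqrt (he_nonneg t ht)
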